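/- Let m, n, k be positive integers with k ≤ n, let X ∈ M_m ⊗ M_n, and let A_1,…,A_N, B_1,…,B_N ∈ M_{k,n} satisfy ∑_{i=1}^N A_i A_i^* ≤ I_k and ∑_{i=1}^N B_i B_i^* ≤ I_k (in the positive semidefinite ordering). Then ‖∑_{i=1}^N (I_m ⊗ A_i) X (I_m ⊗ B_i^*)‖ ≤ ‖X‖_{S(k)}. (This is the '≤' direction in the proof of Theorem 3.1.) -/

import Mathlib

open scoped ComplexOrder Kronecker
open Matrix

noncomputable section

/-- The standard inner product `⟨v, w⟩ = ∑ conj(vᵢ) wᵢ` on `I → ℂ`. -/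
def inprod {I : Type*} [Fintype I] (v w : I → ℂ) : ℂ :=
  ∑ i, (starRingEnd ℂ) (v i) * w i

/-- `v` is a unit vector. -/
def UnitVec {I : Type*} [Fintype I] (v : I → ℂ) : Prop :=
  inprod v v = 1

/-- The Schmidt rank of a vector in `ℂ^I ⊗ ℂ^J`, i.e. the rank of the associated
`I × J` coefficient matrix. -/
noncomputable def SchmidtRank {I J : Type*} [Fintype I] [Fintype J] (v : I × J → ℂ) : ℕ :=
  (Matrix.of fun i j => v (i, j)).rank

/-- The operator norm (largest singular value) of a matrix, as
`sup { |⟨v, A w⟩| : v, w unit vectors }`. -/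
noncomputable def opNorm {I J : Type*} [Fintype I] [Fintype J] (A : Matrix I J ℂ) : ℝ :=
  sSup { t : ℝ | ∃ v w, UnitVec v ∧ UnitVec w ∧ t = ‖inprod v (A.mulVec w)‖ }

/-- The `S(k)`-norm of `X ∈ M_I ⊗ M_J`. -/
noncomputable def SNorm {I J : Type*} [Fintype I] [Fintype J] (k : ℕ)
    (X : Matrix (I × J) (I × J) ℂ) : ℝ :=
  sSup { t : ℝ | ∃ v w : I × J → ℂ, UnitVec v ∧ UnitVec w ∧
    SchmidtRank v ≤ k ∧ SchmidtRank w ≤ k ∧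
    t = ‖inprod v (X.mulVec w)‖ }

/-- `X` is a `k`-block positive (Hermitian) operator: `⟨v, X v⟩ ≥ 0` for every
vector of Schmidt rank at most `k`. -/
def kBlockPos {I J : Type*} [Fintype I] [Fintype J] (k : ℕ)
    (X : Matrix (I × J) (I × J) ℂ) : Prop :=
  X.IsHermitian ∧ ∀ v : I × J → ℂ, SchmidtRank v ≤ k → 0 ≤ inprod v (X.mulVec v)

/-- `ρ` has Schmidt number at most `k` (in particular it is positive semidefinite):
it is a finite nonnegative combination of rank-one projections onto vectors of
Schmidt rank at most `k`. -/
def SchmidtNumberLE {I J : Type*} [Fintype I] [Fintype J] (k : ℕ)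
    (ρ : Matrix (I × J) (I × J) ℂ) : Prop :=
  ∃ (N : ℕ) (c : Fin N → ℝ) (v : Fin N → (I × J → ℂ)),
    (∀ i, 0 ≤ c i) ∧ (∀ i, SchmidtRank (v i) ≤ k) ∧
    ρ = ∑ i, (c i : ℂ) • Matrix.vecMulVec (v i) (star (v i))

/-- `id_I ⊗ Φ` : the map applying `Φ` to the second tensor factor. -/
noncomputable def tensorId {I : Type*} [Fintype I] {a b : ℕ}
    (Φ : Matrix (Fin a) (Fin a) ℂ →ₗ[ℂ] Matrix (Fin b) (Fin b) ℂ)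
    (X : Matrix (I × Fin a) (I × Fin a) ℂ) : Matrix (I × Fin b) (I × Fin b) ℂ :=
  Matrix.of fun p q => Φ (Matrix.of fun s t => X (p.1, s) (q.1, t)) p.2 q.2

/-- The positive semidefinite square root (the definition removed from Mathlib, restored). -/
noncomputable def Matrix.PosSemidef.sqrt {n : Type*} [Fintype n] [DecidableEq n] {𝕜 : Type*}
    [RCLike 𝕜] {A : Matrix n n 𝕜} (hA : A.PosSemidef) : Matrix n n 𝕜 :=
  hA.1.eigenvectorUnitary.1 * Matrix.diagonal ((↑) ∘ (hA.1.eigenvalues · |>.sqrt)) *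
  (star hA.1.eigenvectorUnitary : Matrix n n 𝕜)

/-- The trace norm `‖X‖_tr = Tr √(X^* X)`. -/
noncomputable def trNorm {I : Type*} [Fintype I] [DecidableEq I] (X : Matrix I I ℂ) : ℝ :=
  ((Matrix.posSemidef_conjTranspose_mul_self X).sqrt).trace.re

end

section TheoremAux
open Matrix

variable {I K J : Type*} [Fintype I] [Fintype K] [Fintype J]

lemma inprod_eq_dot (v w : I → ℂ) : inprod v w = star v ⬝ᵥ w := by
  unfold inprod; rfl

/-- The squared Euclidean norm. -/
noncomputable def nsq {I : Type*} [Fintype I] (v : I → ℂ) : ℝ := ∑ i, Complex.normSq (v i)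

lemma nsq_nonneg (v : I → ℂ) : 0 ≤ nsq v :=
  Finset.sum_nonneg fun i _ => Complex.normSq_nonneg _

lemma inprod_self (v : I → ℂ) : inprod v v = (nsq v : ℝ) := by
  simp [inprod, nsq, ← Complex.normSq_eq_conj_mul_self]

lemma nsq_eq_zero {v : I → ℂ} (h : nsq v = 0) : v = 0 := by
  funext i
  have := (Finset.sum_eq_zero_iff_of_nonneg (fun i _ => Complex.normSq_nonneg (v i))).mp h i
    (Finset.mem_univ i)
  simpa [Complex.normSq_eq_zero] using this

lemma unit_nsq {v : I → ℂ} (h : UnitVec v) : nsq v = 1 := by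
  have h2 := inprod_self v
  rw [UnitVec] at h
  rw [h] at h2
  exact_mod_cast h2.symm

lemma abs_le_one_of_unit {v : I → ℂ} (h : UnitVec v) (i : I) : ‖v i‖ ≤ 1 := by
  have h1 : Complex.normSq (v i) ≤ 1 := by
    rw [← unit_nsq h]
    exact Finset.single_le_sum (fun j _ => Complex.normSq_nonneg (v j)) (Finset.mem_univ i)
  nlinarith [Complex.sq_norm (v i), norm_nonneg (v i)]

omit [Fintype J] in
lemma inprod_sum_right {v : I → ℂ} {s : Finset J} (u : J → I → ℂ) :
    inprod v (∑ j ∈ s, u j) = ∑ j ∈ s, inprod v (u j) := by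
  simp only [inprod, Finset.sum_apply, Finset.mul_sum]
  exact Finset.sum_comm

lemma inprod_smul (c d : ℂ) (v w : I → ℂ) :
    inprod (c • v) (d • w) = (starRingEnd ℂ) c * d * inprod v w := by
  simp only [inprod, Pi.smul_apply, smul_eq_mul, Finset.mul_sum]
  congr 1; funext i; rw [_root_.map_mul]; ring

lemma inprod_triple {P : Type*} [Fintype P] (v : I → ℂ) (w : P → ℂ) (Pm : Matrix I J ℂ)
    (X : Matrix J J ℂ) (Qm : Matrix J P ℂ) :
    inprod v ((Pm * X * Qm) *ᵥ w) = inprod (Pmᴴ *ᵥ v) (X *ᵥ (Qm *ᵥ w)) := by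
  rw [inprod_eq_dot, inprod_eq_dot, ← Matrix.mulVec_mulVec, ← Matrix.mulVec_mulVec,
    Matrix.dotProduct_mulVec, Matrix.star_mulVec, Matrix.conjTranspose_conjTranspose]

lemma inprod_adj_self (v : I → ℂ) (Pm : Matrix I J ℂ) :
    inprod (Pmᴴ *ᵥ v) (Pmᴴ *ᵥ v) = inprod v ((Pm * Pmᴴ) *ᵥ v) := by
  rw [inprod_eq_dot, inprod_eq_dot, ← Matrix.mulVec_mulVec,
    Matrix.dotProduct_mulVec, Matrix.star_mulVec, Matrix.conjTranspose_conjTranspose,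
    Matrix.vecMul_vecMul, Matrix.mulVec_mulVec, Matrix.dotProduct_mulVec]

lemma kron_conjTranspose {m n p q : Type*} [Fintype n] [Fintype q]
    (A : Matrix m n ℂ) (B : Matrix p q ℂ) : (A ⊗ₖ B)ᴴ = Aᴴ ⊗ₖ Bᴴ := by
  ext ⟨i, s⟩ ⟨j, t⟩
  simp [Matrix.conjTranspose_apply, Matrix.kroneckerMap_apply, mul_comm]

lemma one_kron_sum {m p q : Type*} [Fintype m] [DecidableEq m] {N : ℕ}
    (S : Fin N → Matrix p q ℂ) :
    (1 : Matrix m m ℂ) ⊗ₖ (∑ i, S i) = ∑ i, (1 : Matrix m m ℂ) ⊗ₖ S i := by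
  ext ⟨i, s⟩ ⟨j, t⟩
  simp [Matrix.kroneckerMap_apply, Matrix.sum_apply, Finset.mul_sum]

lemma one_kron_sub {m p : Type*} [Fintype m] [DecidableEq m] (S T : Matrix p p ℂ) :
    (1 : Matrix m m ℂ) ⊗ₖ (S - T) = (1 : Matrix m m ℂ) ⊗ₖ S - (1 : Matrix m m ℂ) ⊗ₖ T := by
  ext ⟨i, s⟩ ⟨j, t⟩
  simp [Matrix.kroneckerMap_apply, Matrix.sub_apply, mul_sub]

lemma one_kron_posSemidef {m p : Type*} [Fintype m] [DecidableEq m] [Fintype p] [DecidableEq p]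
    {M : Matrix p p ℂ} (hM : M.PosSemidef) :
    ((1 : Matrix m m ℂ) ⊗ₖ M).PosSemidef := by
  exact Matrix.PosSemidef.one.kronecker hM

variable [DecidableEq I]

lemma schmidtRank_kron_adj_mulVec (C : Matrix K J ℂ) (v : I × K → ℂ) :
    SchmidtRank (((1 : Matrix I I ℂ) ⊗ₖ C)ᴴ *ᵥ v) ≤ Fintype.card K := by
  have key : (Matrix.of fun i j => ((((1 : Matrix I I ℂ) ⊗ₖ C)ᴴ) *ᵥ v) (i, j))
      = (Matrix.of fun i t => v (i, t)) * (Cᴴ)ᵀ := by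
    ext p s
    simp [Matrix.mulVec, dotProduct, Matrix.mul_apply, Matrix.conjTranspose_apply,
      Matrix.kroneckerMap_apply, Fintype.sum_prod_type, Matrix.one_apply, apply_ite,
      star_mul', Finset.sum_ite_eq, mul_comm]
  rw [SchmidtRank, key]
  exact le_trans (Matrix.rank_mul_le_right _ _) (Matrix.rank_le_card_height _)

omit [Fintype K] in
lemma schmidtRank_smul (c : ℂ) (v : I × J → ℂ) :
    SchmidtRank (c • v) ≤ SchmidtRank v := by
  have key : (Matrix.of fun i j => (c • v) (i, j))
      = (c • (1 : Matrix I I ℂ)) * (Matrix.of fun i j => v (i, j)) := by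
    rw [Matrix.smul_mul, Matrix.one_mul]
    ext i j
    simp
  rw [SchmidtRank, key]
  exact Matrix.rank_mul_le_right _ _

omit [Fintype K] [DecidableEq I] in
lemma sum_mulVec' {N : ℕ} (M : Fin N → Matrix I J ℂ) (w : J → ℂ) :
    (∑ i, M i) *ᵥ w = ∑ i, (M i *ᵥ w) := by
  ext j
  simp only [Matrix.mulVec, dotProduct, Matrix.sum_apply, Finset.sum_mul,
    Finset.sum_apply]
  exact Finset.sum_comm

omit [Fintype K] [Fintype J] [DecidableEq I] in
lemma abs_inprod_le_entrysum {P Q : Type*} [Fintype P] [Fintype Q]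
    (X : Matrix P Q ℂ) {v : P → ℂ} {w : Q → ℂ} (hv : UnitVec v) (hw : UnitVec w) :
    ‖inprod v (X *ᵥ w)‖ ≤ ∑ p, ∑ q, ‖X p q‖ := by
  rw [inprod]
  refine le_trans (norm_sum_le _ _) (Finset.sum_le_sum fun p _ => ?_)
  rw [norm_mul]
  have h2 : ‖(X *ᵥ w) p‖ ≤ ∑ q, ‖X p q‖ := by
    show ‖∑ q, X p q * w q‖ ≤ _
    refine le_trans (norm_sum_le _ _) (Finset.sum_le_sum fun q _ => ?_)
    rw [norm_mul]
    calc ‖X p q‖ * ‖w q‖ ≤ ‖X p q‖ * 1 :=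
          mul_le_mul_of_nonneg_left (abs_le_one_of_unit hw q) (norm_nonneg _)
      _ = ‖X p q‖ := mul_one _
  calc ‖(starRingEnd ℂ) (v p)‖ * ‖(X *ᵥ w) p‖
      ≤ 1 * (∑ q, ‖X p q‖) := by
        refine mul_le_mul ?_ h2 (norm_nonneg _) zero_le_one
        rw [Complex.norm_conj]; exact abs_le_one_of_unit hv p
    _ = ∑ q, ‖X p q‖ := one_mul _

omit [Fintype K] in
lemma bddAbove_SNormSet (k : ℕ) (X : Matrix (I × J) (I × J) ℂ) :
    BddAbove { t : ℝ | ∃ v w : I × J → ℂ, UnitVec v ∧ UnitVec w ∧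
      SchmidtRank v ≤ k ∧ SchmidtRank w ≤ k ∧
      t = ‖inprod v (X.mulVec w)‖ } := by
  refine ⟨∑ p, ∑ q, ‖X p q‖, ?_⟩
  rintro t ⟨v, w, hv, hw, -, -, rfl⟩
  exact abs_inprod_le_entrysum X hv hw

omit [Fintype K] in
lemma SNorm_nonneg (k : ℕ) (X : Matrix (I × J) (I × J) ℂ) : 0 ≤ SNorm k X := by
  apply Real.sSup_nonneg
  rintro t ⟨v, w, hv, hw, -, -, rfl⟩
  exact norm_nonneg _

omit [Fintype K] in
lemma abs_inprod_le_SNorm {k : ℕ} (X : Matrix (I × J) (I × J) ℂ)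
    {v w : I × J → ℂ} (hv : SchmidtRank v ≤ k) (hw : SchmidtRank w ≤ k) :
    ‖inprod v (X *ᵥ w)‖ ≤ Real.sqrt (nsq v) * Real.sqrt (nsq w) * SNorm k X := by
  have hS : 0 ≤ SNorm k X := SNorm_nonneg k X
  by_cases hv0 : v = 0
  · subst hv0
    have : inprod (0 : I × J → ℂ) (X *ᵥ w) = 0 := by simp [inprod]
    rw [this, norm_zero]
    positivity
  by_cases hw0 : w = 0
  · subst hw0
    have : inprod v (X *ᵥ (0 : I × J → ℂ)) = 0 := by simp [inprod, Matrix.mulVec_zero]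
    rw [this, norm_zero]
    positivity
  have hva : 0 < nsq v := (nsq_nonneg v).lt_of_ne fun h => hv0 (nsq_eq_zero h.symm)
  have hwa : 0 < nsq w := (nsq_nonneg w).lt_of_ne fun h => hw0 (nsq_eq_zero h.symm)
  set a := Real.sqrt (nsq v) with ha
  set b := Real.sqrt (nsq w) with hb
  have hapos : 0 < a := Real.sqrt_pos.mpr hva
  have hbpos : 0 < b := Real.sqrt_pos.mpr hwa
  have hasq : (a : ℝ) * a = nsq v := Real.mul_self_sqrt hva.le
  have hbsq : (b : ℝ) * b = nsq w := Real.mul_self_sqrt hwa.le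
  have hunit : ∀ (u : I × J → ℂ) (c : ℝ), 0 < c → c * c = nsq u →
      UnitVec ((c⁻¹ : ℂ) • u) := by
    intro u c hc hcc
    unfold UnitVec
    rw [inprod_smul, inprod_self]
    have h1 : (starRingEnd ℂ) ((c : ℂ)⁻¹) = (c : ℂ)⁻¹ := by
      rw [map_inv₀, Complex.conj_ofReal]
    rw [h1, ← hcc]
    push_cast
    field_simp
  have huv : UnitVec (((a : ℝ) : ℂ)⁻¹ • v) := by
    have := hunit v a hapos hasq
    simpa using this
  have huw : UnitVec (((b : ℝ) : ℂ)⁻¹ • w) := by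
    have := hunit w b hbpos hbsq
    simpa using this
  have hval : ‖inprod (((a : ℝ) : ℂ)⁻¹ • v) (X *ᵥ (((b : ℝ) : ℂ)⁻¹ • w))‖
      = a⁻¹ * b⁻¹ * ‖inprod v (X *ᵥ w)‖ := by
    rw [Matrix.mulVec_smul, inprod_smul, norm_mul, norm_mul]
    rw [Complex.norm_conj, norm_inv, norm_inv, Complex.norm_real, Complex.norm_real,
      Real.norm_of_nonneg hapos.le, Real.norm_of_nonneg hbpos.le]
  have hmem : a⁻¹ * b⁻¹ * ‖inprod v (X *ᵥ w)‖ ∈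
      { t : ℝ | ∃ v w : I × J → ℂ, UnitVec v ∧ UnitVec w ∧
        SchmidtRank v ≤ k ∧ SchmidtRank w ≤ k ∧
        t = ‖inprod v (X.mulVec w)‖ } := by
    exact ⟨_, _, huv, huw, le_trans (schmidtRank_smul _ _) hv,
      le_trans (schmidtRank_smul _ _) hw, hval.symm⟩
  have hle : a⁻¹ * b⁻¹ * ‖inprod v (X *ᵥ w)‖ ≤ SNorm k X :=
    le_csSup (bddAbove_SNormSet k X) hmem
  have key : ‖inprod v (X *ᵥ w)‖
      = a * b * (a⁻¹ * b⁻¹ * ‖inprod v (X *ᵥ w)‖) := by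
    field_simp
  rw [key]
  exact mul_le_mul_of_nonneg_left hle (by positivity)

lemma sum_nsq_adj_le_one {N : ℕ} [DecidableEq K] (A : Fin N → Matrix K J ℂ)
    (hA : ((1 : Matrix K K ℂ) - ∑ i, A i * (A i)ᴴ).PosSemidef)
    {v : I × K → ℂ} (hv : UnitVec v) :
    ∑ i, nsq (((1 : Matrix I I ℂ) ⊗ₖ A i)ᴴ *ᵥ v) ≤ 1 := by
  have hre : ∀ (u : I × J → ℂ), nsq u = (inprod u u).re := by
    intro u; rw [inprod_self, Complex.ofReal_re]
  have step1 : ∑ i, nsq (((1 : Matrix I I ℂ) ⊗ₖ A i)ᴴ *ᵥ v)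
      = (inprod v (((1 : Matrix I I ℂ) ⊗ₖ (∑ i, A i * (A i)ᴴ)) *ᵥ v)).re := by
    have h1 : ∀ i : Fin N, nsq (((1 : Matrix I I ℂ) ⊗ₖ A i)ᴴ *ᵥ v)
        = (inprod v ((((1 : Matrix I I ℂ) ⊗ₖ A i) * ((1 : Matrix I I ℂ) ⊗ₖ A i)ᴴ) *ᵥ v)).re := by
      intro i; rw [hre, inprod_adj_self]
    have h2 : ∀ i : Fin N, ((1 : Matrix I I ℂ) ⊗ₖ A i) * ((1 : Matrix I I ℂ) ⊗ₖ A i)ᴴ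
        = (1 : Matrix I I ℂ) ⊗ₖ (A i * (A i)ᴴ) := by
      intro i
      rw [kron_conjTranspose, Matrix.conjTranspose_one, ← Matrix.mul_kronecker_mul, one_mul]
    simp_rw [h1, h2]
    rw [one_kron_sum, sum_mulVec', inprod_sum_right, Complex.re_sum]
  rw [step1]
  have hpsd := one_kron_posSemidef (m := I) hA
  have h0 := hpsd.dotProduct_mulVec_nonneg v
  rw [one_kron_sub, Matrix.one_kronecker_one, Matrix.sub_mulVec, dotProduct_sub,
    Matrix.one_mulVec] at h0
  rw [← inprod_eq_dot, ← inprod_eq_dot] at h0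
  have h3 := (Complex.le_def.mp h0).1
  rw [Complex.zero_re, Complex.sub_re] at h3
  have h4 : (inprod v v).re = 1 := by rw [hv]; simp
  linarith

end TheoremAux

/-- The '≤' direction of Theorem 3.1. -/
theorem opNorm_le_SNorm_of_contractive_families (m n k N : ℕ) (hm : 0 < m) (hn : 0 < n)
    (hk : 0 < k) (hkn : k ≤ n)
    (X : Matrix (Fin m × Fin n) (Fin m × Fin n) ℂ)
    (A B : Fin N → Matrix (Fin k) (Fin n) ℂ)
    (hA : ((1 : Matrix (Fin k) (Fin k) ℂ) - ∑ i, A i * (A i)ᴴ).PosSemidef)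
    (hB : ((1 : Matrix (Fin k) (Fin k) ℂ) - ∑ i, B i * (B i)ᴴ).PosSemidef) :
    opNorm (∑ i, ((1 : Matrix (Fin m) (Fin m) ℂ) ⊗ₖ A i) * X *
      (((1 : Matrix (Fin m) (Fin m) ℂ) ⊗ₖ B i)ᴴ)) ≤ SNorm k X := by
  classical
  apply Real.sSup_le _ (SNorm_nonneg k X)
  rintro t ⟨v, w, hv, hw, rfl⟩
  have hterm : ∀ i : Fin N,
      inprod v (((((1 : Matrix (Fin m) (Fin m) ℂ) ⊗ₖ A i) * X *
        (((1 : Matrix (Fin m) (Fin m) ℂ) ⊗ₖ B i)ᴴ))) *ᵥ w)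
      = inprod (((1 : Matrix (Fin m) (Fin m) ℂ) ⊗ₖ A i)ᴴ *ᵥ v)
          (X *ᵥ ((((1 : Matrix (Fin m) (Fin m) ℂ) ⊗ₖ B i)ᴴ) *ᵥ w)) := fun i =>
    inprod_triple v w _ X _
  rw [show (∑ i, ((1 : Matrix (Fin m) (Fin m) ℂ) ⊗ₖ A i) * X *
      (((1 : Matrix (Fin m) (Fin m) ℂ) ⊗ₖ B i)ᴴ)).mulVec w
    = ∑ i, ((((1 : Matrix (Fin m) (Fin m) ℂ) ⊗ₖ A i) * X *
      (((1 : Matrix (Fin m) (Fin m) ℂ) ⊗ₖ B i)ᴴ)) *ᵥ w) from sum_mulVec' _ _,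
    inprod_sum_right]
  simp_rw [hterm]
  set v' : Fin N → (Fin m × Fin n → ℂ) :=
    fun i => ((1 : Matrix (Fin m) (Fin m) ℂ) ⊗ₖ A i)ᴴ *ᵥ v with hv'
  set w' : Fin N → (Fin m × Fin n → ℂ) :=
    fun i => ((1 : Matrix (Fin m) (Fin m) ℂ) ⊗ₖ B i)ᴴ *ᵥ w with hw'
  have hS : 0 ≤ SNorm k X := SNorm_nonneg k X
  have hSRv : ∀ i, SchmidtRank (v' i) ≤ k := fun i => by
    simpa using schmidtRank_kron_adj_mulVec (A i) v
  have hSRw : ∀ i, SchmidtRank (w' i) ≤ k := fun i => by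
    simpa using schmidtRank_kron_adj_mulVec (B i) w
  calc ‖∑ i, inprod (v' i) (X *ᵥ w' i)‖
      ≤ ∑ i, ‖inprod (v' i) (X *ᵥ w' i)‖ := norm_sum_le _ _
    _ ≤ ∑ i, Real.sqrt (nsq (v' i)) * Real.sqrt (nsq (w' i)) * SNorm k X :=
        Finset.sum_le_sum fun i _ => abs_inprod_le_SNorm X (hSRv i) (hSRw i)
    _ = (∑ i, Real.sqrt (nsq (v' i)) * Real.sqrt (nsq (w' i))) * SNorm k X :=
        (Finset.sum_mul _ _ _).symm
    _ ≤ (Real.sqrt (∑ i, nsq (v' i)) * Real.sqrt (∑ i, nsq (w' i))) * SNorm k X := by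
        refine mul_le_mul_of_nonneg_right ?_ hS
        exact Real.sum_sqrt_mul_sqrt_le _ (fun i => nsq_nonneg _) (fun i => nsq_nonneg _)
    _ ≤ (1 * 1) * SNorm k X := by
        refine mul_le_mul_of_nonneg_right ?_ hS
        have hva : Real.sqrt (∑ i, nsq (v' i)) ≤ 1 := by
          rw [show (1 : ℝ) = Real.sqrt 1 from (Real.sqrt_one).symm]
          exact Real.sqrt_le_sqrt (sum_nsq_adj_le_one A hA hv)
        have hwa : Real.sqrt (∑ i, nsq (w' i)) ≤ 1 := by
          rw [show (1 : ℝ) = Real.sqrt 1 from (Real.sqrt_one).symm]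
          exact Real.sqrt_le_sqrt (sum_nsq_adj_le_one B hB hw)
        exact mul_le_mul hva hwa (Real.sqrt_nonneg _) zero_le_one
    _ = SNorm k X := by ring
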